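/- For all t ∈ [0, π/2], h(cos t) + h(sin t) ≥ log 2, where h(s) = −((1+s)/2)·log((1+s)/2) − ((1−s)/2)·log((1−s)/2). -/

import Mathlib

noncomputable section

/-- The binary entropy function in the Bloch parameterization. -/
def binEnt (s : ℝ) : ℝ :=
  -((1 + s) / 2 * Real.log ((1 + s) / 2)) - (1 - s) / 2 * Real.log ((1 - s) / 2)

namespace BinEntAux

open Real Set

def L : ℝ := Real.log 2
def F (p : ℝ) : ℝ := Real.binEntropy p - 4*p*(1-p)*L
def G (p : ℝ) : ℝ := Real.log (1-p) - Real.log p - (4-8*p)*L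
def G' (p : ℝ) : ℝ := 8*L - 1/(1-p) - 1/p
def b : ℝ := (1 + Real.sqrt (1 - 1/(2*L)))/2

lemma L_pos : 0 < L := Real.log_pos (by norm_num)

lemma two_L_gt_one : 1 < 2*L := by
  have := Real.log_two_gt_d9; unfold L; linarith

lemma inv2L_lt_one : 1/(2*L) < 1 := by
  rw [div_lt_one (by linarith [two_L_gt_one, L_pos])]
  exact two_L_gt_one

lemma inv2L_pos : 0 < 1/(2*L) := div_pos one_pos (by linarith [L_pos])

lemma a_sq : (Real.sqrt (1 - 1/(2*L)))^2 = 1 - 1/(2*L) :=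
  Real.sq_sqrt (by linarith [inv2L_lt_one])

lemma half_lt_b : (1/2:ℝ) < b := by
  unfold b
  have : 0 < Real.sqrt (1 - 1/(2*L)) :=
    Real.sqrt_pos.2 (by linarith [inv2L_lt_one])
  linarith

lemma b_lt_one : b < 1 := by
  unfold b
  nlinarith [a_sq, Real.sqrt_nonneg (1 - 1/(2*L)), inv2L_pos]

lemma b_mul : b * (1 - b) = 1/(8*L) := by
  have ha := a_sq
  have hL := L_pos
  have hL0 : L ≠ 0 := hL.ne'
  set a := Real.sqrt (1 - 1/(2*L)) with hadef
  have h : b * (1-b) = (1 - a^2)/4 := by unfold b; rw [← hadef]; ring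
  rw [h, ha]
  field_simp
  ring

lemma hG : ∀ p ∈ Set.Ioo (0:ℝ) 1, HasDerivAt F (G p) p := by
  intro p hp
  have h1 : HasDerivAt Real.binEntropy (Real.log (1-p) - Real.log p) p :=
    Real.hasDerivAt_binEntropy hp.1.ne' hp.2.ne
  have h2 : HasDerivAt (fun q : ℝ => 4*q*(1-q)*L) ((4-8*p)*L) p := by
    have e : (fun q : ℝ => 4*q*(1-q)*L) = fun q => (4*L)*q - (4*L)*(q*q) := by
      funext q; ring
    rw [e]
    have h := ((hasDerivAt_id' (x := p)).const_mul (4*L)).sub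
      (((hasDerivAt_id' (x := p)).mul (hasDerivAt_id' (x := p))).const_mul (4*L))
    refine h.congr_deriv ?_
    ring
  exact h1.sub h2

lemma hG' : ∀ p ∈ Set.Ioo (0:ℝ) 1, HasDerivAt G (G' p) p := by
  intro p hp
  have hp0 : p ≠ 0 := hp.1.ne'
  have hp1 : (1:ℝ) - p ≠ 0 := by have := hp.2; intro h; linarith [sub_eq_zero.mp h]
  have h1 : HasDerivAt (fun q : ℝ => Real.log (1-q)) ((0-1)/(1-p)) p :=
    (((hasDerivAt_const p (1:ℝ)).sub (hasDerivAt_id' (x := p)))).log hp1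
  have h2 : HasDerivAt Real.log p⁻¹ p := Real.hasDerivAt_log hp0
  have h3 : HasDerivAt (fun q : ℝ => (4-8*q)*L) ((0-8*1)*L) p :=
    ((hasDerivAt_const p (4:ℝ)).sub ((hasDerivAt_id' (x := p)).const_mul 8)).mul_const L
  have h := (h1.sub h2).sub h3
  refine h.congr_deriv ?_
  unfold G'
  field_simp
  ring

lemma hG'_nonneg : ∀ x ∈ Set.Ioo (1/2:ℝ) b, 0 ≤ G' x := by
  intro x hx
  have hL := L_pos
  have hb1 := b_lt_one
  have hbm := b_mul
  have hx0 : (0:ℝ) < x := by linarith [hx.1]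
  have hx1 : x < 1 := by linarith [hx.2]
  have key : 1 ≤ 8*L*(x*(1-x)) := by
    have h1 : 8*L*(b*(1-b)) = 1 := by rw [hbm]; field_simp
    nlinarith [mul_nonneg (sub_nonneg.2 hx.2.le) (by linarith [hx.1, half_lt_b] : (0:ℝ) ≤ x + b - 1)]
  have hx0' : x ≠ 0 := hx0.ne'
  have hx1' : (1:ℝ) - x ≠ 0 := by intro h; nlinarith [sub_eq_zero.mp h]
  have e : G' x = (8*L*(x*(1-x)) - 1)/(x*(1-x)) := by
    unfold G'
    field_simp
    ring
  rw [e]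
  apply div_nonneg (by linarith)
  nlinarith

lemma hG'_nonpos : ∀ x ∈ Set.Ioo b 1, G' x ≤ 0 := by
  intro x hx
  have hL := L_pos
  have hbm := b_mul
  have hbh := half_lt_b
  have hx0 : (0:ℝ) < x := by linarith [hx.1]
  have hx1 : x < 1 := hx.2
  have key : 8*L*(x*(1-x)) ≤ 1 := by
    have h1 : 8*L*(b*(1-b)) = 1 := by rw [hbm]; field_simp
    nlinarith [mul_nonneg (sub_nonneg.2 hx.1.le) (by linarith [hx.1] : (0:ℝ) ≤ x + b - 1)]
  have hx0' : x ≠ 0 := hx0.ne'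
  have hx1' : (1:ℝ) - x ≠ 0 := by intro h; nlinarith [sub_eq_zero.mp h]
  have e : G' x = (8*L*(x*(1-x)) - 1)/(x*(1-x)) := by
    unfold G'
    field_simp
    ring
  rw [e]
  apply div_nonpos_of_nonpos_of_nonneg (by linarith)
  nlinarith

lemma memIoo01_of_A {x : ℝ} (hx : x ∈ Set.Icc (1/2:ℝ) b) : x ∈ Set.Ioo (0:ℝ) 1 :=
  ⟨by linarith [hx.1], by linarith [hx.2, b_lt_one]⟩

lemma G_half : G (1/2) = 0 := by unfold G; norm_num

lemma G_nonneg : ∀ x ∈ Set.Icc (1/2:ℝ) b, 0 ≤ G x := by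
  have hmono : MonotoneOn G (Set.Icc (1/2) b) := by
    apply monotoneOn_of_deriv_nonneg (convex_Icc _ _)
    · intro x hx
      exact (hG' x (memIoo01_of_A hx)).continuousAt.continuousWithinAt
    · rw [interior_Icc]
      intro x hx
      exact (hG' x (memIoo01_of_A ⟨hx.1.le, hx.2.le⟩)).differentiableAt.differentiableWithinAt
    · rw [interior_Icc]
      intro x hx
      rw [(hG' x (memIoo01_of_A ⟨hx.1.le, hx.2.le⟩)).deriv]
      exact hG'_nonneg x hx
  intro x hx
  have h := hmono ⟨le_rfl, half_lt_b.le⟩ hx hx.1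
  rw [G_half] at h
  exact h

lemma F_cont : Continuous F := by
  unfold F
  exact Real.binEntropy_continuous.sub (by continuity)

lemma F_half : F (1/2) = 0 := by
  unfold F
  rw [show (1/2:ℝ) = 2⁻¹ by norm_num, Real.binEntropy_two_inv]
  unfold L; ring

lemma F_one : F 1 = 0 := by
  unfold F
  rw [Real.binEntropy_one]
  ring

lemma F_nonneg_A : ∀ x ∈ Set.Icc (1/2:ℝ) b, 0 ≤ F x := by
  have hmono : MonotoneOn F (Set.Icc (1/2) b) := by
    apply monotoneOn_of_deriv_nonneg (convex_Icc _ _) F_cont.continuousOn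
    · rw [interior_Icc]
      intro x hx
      exact (hG x (memIoo01_of_A ⟨hx.1.le, hx.2.le⟩)).differentiableAt.differentiableWithinAt
    · rw [interior_Icc]
      intro x hx
      rw [(hG x (memIoo01_of_A ⟨hx.1.le, hx.2.le⟩)).deriv]
      exact G_nonneg x ⟨hx.1.le, hx.2.le⟩
  intro x hx
  have h := hmono ⟨le_rfl, half_lt_b.le⟩ hx hx.1
  rw [F_half] at h
  exact h

lemma memIoo01_of_B {x : ℝ} (hx : x ∈ Set.Ioo b 1) : x ∈ Set.Ioo (0:ℝ) 1 :=
  ⟨by linarith [hx.1, half_lt_b], hx.2⟩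

lemma F_concave_B : ConcaveOn ℝ (Set.Icc b 1) F := by
  apply concaveOn_of_hasDerivWithinAt2_nonpos (f' := G) (f'' := G')
    (convex_Icc _ _) F_cont.continuousOn
  · rw [interior_Icc]
    intro x hx
    exact (hG x (memIoo01_of_B hx)).hasDerivWithinAt
  · rw [interior_Icc]
    intro x hx
    exact (hG' x (memIoo01_of_B hx)).hasDerivWithinAt
  · rw [interior_Icc]
    intro x hx
    exact hG'_nonpos x hx

lemma F_nonneg_B : ∀ x ∈ Set.Icc b 1, 0 ≤ F x := by
  intro x hx
  have hseg : x ∈ segment ℝ b 1 := by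
    rw [segment_eq_Icc b_lt_one.le]; exact hx
  have h := F_concave_B.ge_on_segment (x := b) (y := 1) (z := x)
    ⟨le_rfl, b_lt_one.le⟩ ⟨b_lt_one.le, le_rfl⟩ hseg
  have hFb : 0 ≤ F b := F_nonneg_A b ⟨half_lt_b.le, le_rfl⟩
  rw [F_one] at h
  exact le_trans (le_min hFb le_rfl) h

lemma F_nonneg : ∀ p ∈ Set.Icc (1/2:ℝ) 1, 0 ≤ F p := by
  intro p hp
  rcases le_total p b with h | h
  · exact F_nonneg_A p ⟨hp.1, h⟩
  · exact F_nonneg_B p ⟨h, hp.2⟩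

end BinEntAux

lemma binEnt_ge : ∀ s ∈ Set.Icc (0:ℝ) 1, (1 - s^2) * Real.log 2 ≤ binEnt s := by
  intro s hs
  have hp : (1+s)/2 ∈ Set.Icc (1/2:ℝ) 1 := ⟨by linarith [hs.1], by linarith [hs.2]⟩
  have h := BinEntAux.F_nonneg _ hp
  have he : binEnt s = Real.binEntropy ((1+s)/2) := by
    unfold binEnt Real.binEntropy
    rw [Real.log_inv, Real.log_inv, show (1:ℝ) - (1+s)/2 = (1-s)/2 by ring]
    ring
  rw [he]
  unfold BinEntAux.F at h
  have e : 4*((1+s)/2)*(1-(1+s)/2)*BinEntAux.L = (1-s^2)*Real.log 2 := by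
    unfold BinEntAux.L; ring
  linarith

/-- For `t ∈ [0, π/2]`, `h(cos t) + h(sin t) ≥ log 2`. -/
theorem binEnt_cos_add_binEnt_sin_ge (t : ℝ) (ht : t ∈ Set.Icc 0 (Real.pi / 2)) :
    binEnt (Real.cos t) + binEnt (Real.sin t) ≥ Real.log 2 := by
  obtain ⟨ht0, ht1⟩ := ht
  have hpi := Real.pi_pos
  have hc : Real.cos t ∈ Set.Icc (0:ℝ) 1 :=
    ⟨Real.cos_nonneg_of_mem_Icc ⟨by linarith, ht1⟩, Real.cos_le_one t⟩
  have hs : Real.sin t ∈ Set.Icc (0:ℝ) 1 :=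
    ⟨Real.sin_nonneg_of_nonneg_of_le_pi ht0 (by linarith), Real.sin_le_one t⟩
  have h1 := binEnt_ge _ hc
  have h2 := binEnt_ge _ hs
  have hpyth := Real.sin_sq_add_cos_sq t
  have e : (1 - Real.cos t^2)*Real.log 2 + (1 - Real.sin t^2)*Real.log 2 = Real.log 2 := by
    linear_combination (-Real.log 2) * hpyth
  linarith

end
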